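/- Let ψ be a branching mechanism of Lévy–Khintchine form satisfying ∫^∞ du/ψ(u) < ∞, let ψ⁻¹ denote the inverse of ψ and φ = ψ' ∘ ψ⁻¹. Then for all λ > 0: λ/ψ⁻¹(λ) ≤ φ(λ) ≤ 4λ/ψ⁻¹(λ). -/

import Mathlib

open MeasureTheory Real Set

private lemma hasDerivAt_F (c x : ℝ) :
    HasDerivAt (fun t : ℝ => Real.exp (-(c * t)) - 1 + c * t) (-c * Real.exp (-(c * x)) + c) x := by
  have h1 : HasDerivAt (fun t : ℝ => -(c * t)) (-c) x := by
    exact ((hasDerivAt_id x).const_mul c).neg.congr_deriv (by ring)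
  have h2 := (Real.hasDerivAt_exp (-(c * x))).comp x h1
  have h3 : HasDerivAt (fun t : ℝ => c * t) c x := by
    simpa using (hasDerivAt_id x).const_mul c
  exact ((h2.sub_const 1).add h3).congr_deriv (by ring)

private lemma F_nonneg (x : ℝ) : 0 ≤ Real.exp (-x) - 1 + x := by
  nlinarith [Real.add_one_le_exp (-x)]

private lemma F_le_linear {x : ℝ} (hx : 0 ≤ x) : Real.exp (-x) - 1 + x ≤ x := by
  nlinarith [Real.exp_le_one_iff.mpr (neg_nonpos.mpr hx)]

private lemma F_le_sq {x : ℝ} (hx : 0 ≤ x) : Real.exp (-x) - 1 + x ≤ x ^ 2 := by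
  set g : ℝ → ℝ := fun t => t ^ 2 - (Real.exp (-t) - 1 + t) with hg
  have hd : ∀ t : ℝ, HasDerivAt g (2 * t - (-Real.exp (-t) + 1)) t := by
    intro t
    have hp : HasDerivAt (fun t : ℝ => t ^ 2) (2 * t) t := by simpa using hasDerivAt_pow 2 t
    have := (hp.sub (hasDerivAt_F 1 t) :
      HasDerivAt (fun t : ℝ => t ^ 2 - (Real.exp (-(1 * t)) - 1 + 1 * t)) _ t)
    simp only [one_mul] at this
    exact this.congr_deriv (by ring)
  have hmono : MonotoneOn g (Ici (0:ℝ)) := by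
    apply monotoneOn_of_deriv_nonneg (convex_Ici 0)
    · exact fun t _ => ((hd t).continuousAt).continuousWithinAt
    · exact fun t _ => ((hd t).differentiableAt).differentiableWithinAt
    · intro t ht
      rw [interior_Ici] at ht
      rw [(hd t).deriv]
      nlinarith [Real.add_one_le_exp (-t), Real.exp_nonneg (-t), (mem_Ioi.mp ht).le]
  have := hmono (self_mem_Ici) hx hx
  simp [hg] at this
  linarith

private lemma F_doubling {x : ℝ} (hx : 0 ≤ x) :
    Real.exp (-(2 * x)) - 1 + 2 * x ≤ 4 * (Real.exp (-x) - 1 + x) := by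
  set g : ℝ → ℝ := fun t => 4 * (Real.exp (-t) - 1 + t) - (Real.exp (-(2 * t)) - 1 + 2 * t)
    with hg
  have hd : ∀ t : ℝ, HasDerivAt g
      (4 * (-Real.exp (-t) + 1) - (-2 * Real.exp (-(2 * t)) + 2)) t := by
    intro t
    have := (((hasDerivAt_F 1 t).const_mul 4).sub (hasDerivAt_F 2 t) :
      HasDerivAt (fun t : ℝ => 4 * (Real.exp (-(1 * t)) - 1 + 1 * t)
        - (Real.exp (-(2 * t)) - 1 + 2 * t)) _ t)
    simp only [one_mul] at this
    exact this.congr_deriv (by ring)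
  have hmono : MonotoneOn g (Ici (0:ℝ)) := by
    apply monotoneOn_of_deriv_nonneg (convex_Ici 0)
    · exact fun t _ => ((hd t).continuousAt).continuousWithinAt
    · exact fun t _ => ((hd t).differentiableAt).differentiableWithinAt
    · intro t ht
      rw [interior_Ici] at ht
      rw [(hd t).deriv]
      have h2 : Real.exp (-(2 * t)) = (Real.exp (-t)) ^ 2 := by
        rw [sq, ← Real.exp_add]; ring_nf
      nlinarith [sq_nonneg (Real.exp (-t) - 1)]
  have := hmono (self_mem_Ici) hx hx
  simp [hg] at this
  linarith

private lemma integrable_F (ν : Measure ℝ) (hν0 : ν (Set.Iic 0) = 0)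
    (hνint : Integrable (fun r => min r (r ^ 2)) ν) {c : ℝ} (hc : 0 ≤ c) :
    Integrable (fun r => Real.exp (-(c * r)) - 1 + c * r) ν := by
  have hpos : ∀ᵐ r ∂ν, 0 < r := by
    rw [ae_iff]
    convert hν0 using 2
    ext r; simp [not_lt]
  refine Integrable.mono' (hνint.const_mul (max c (c ^ 2))) ?_ ?_
  · exact (Continuous.aestronglyMeasurable (by continuity))
  · filter_upwards [hpos] with r hr
    have hcr : 0 ≤ c * r := mul_nonneg hc hr.le
    rw [Real.norm_of_nonneg (F_nonneg (c * r))]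
    have h1 := F_le_linear hcr
    have h2 := F_le_sq hcr
    rcases le_total r (r ^ 2) with h | h
    · rw [min_eq_left h]
      calc Real.exp (-(c * r)) - 1 + c * r ≤ c * r := h1
        _ ≤ max c (c ^ 2) * r := by
            exact mul_le_mul_of_nonneg_right (le_max_left _ _) hr.le
    · rw [min_eq_right h]
      calc Real.exp (-(c * r)) - 1 + c * r ≤ (c * r) ^ 2 := h2
        _ = c ^ 2 * r ^ 2 := by ring
        _ ≤ max c (c ^ 2) * r ^ 2 := by
            exact mul_le_mul_of_nonneg_right (le_max_right _ _) (sq_nonneg r)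

private lemma psi_convex (α β : ℝ) (hα : 0 ≤ α) (hβ : 0 ≤ β)
    (ν : Measure ℝ) (hν0 : ν (Set.Iic 0) = 0)
    (hνint : Integrable (fun r => min r (r ^ 2)) ν)
    (ψ : ℝ → ℝ)
    (hψ : ∀ l : ℝ, 0 ≤ l →
      ψ l = α * l + β * l ^ 2 + ∫ r, (Real.exp (-(l * r)) - 1 + l * r) ∂ν) :
    ConvexOn ℝ (Ici 0) ψ := by
  refine ⟨convex_Ici 0, fun x hx y hy a b ha hb hab => ?_⟩
  simp only [smul_eq_mul, mem_Ici] at *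
  have hxy : 0 ≤ a * x + b * y := by positivity
  rw [hψ _ hxy, hψ x hx, hψ y hy]
  have hIx := integrable_F ν hν0 hνint hx
  have hIy := integrable_F ν hν0 hνint hy
  have hIxy := integrable_F ν hν0 hνint hxy
  have hint : (∫ r, (Real.exp (-((a * x + b * y) * r)) - 1 + (a * x + b * y) * r) ∂ν)
      ≤ a * (∫ r, (Real.exp (-(x * r)) - 1 + x * r) ∂ν)
        + b * (∫ r, (Real.exp (-(y * r)) - 1 + y * r) ∂ν) := by
    rw [← integral_const_mul a, ← integral_const_mul b,
      ← integral_add (hIx.const_mul a) (hIy.const_mul b)]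
    apply integral_mono hIxy ((hIx.const_mul a).add (hIy.const_mul b))
    intro r
    simp only [Pi.add_apply]
    have hexp := convexOn_exp.2 (mem_univ (-(x * r))) (mem_univ (-(y * r))) ha hb hab
    simp only [smul_eq_mul] at hexp
    have harg : a * -(x * r) + b * -(y * r) = -((a * x + b * y) * r) := by ring
    rw [harg] at hexp
    nlinarith [hexp]
  have hsq : β * (a * x + b * y) ^ 2 ≤ a * (β * x ^ 2) + b * (β * y ^ 2) := by
    have hb' : b = 1 - a := by linarith
    subst hb'
    nlinarith [mul_nonneg hβ (mul_nonneg (mul_nonneg ha hb) (sq_nonneg (x - y)))]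
  have hlin : α * (a * x + b * y) = a * (α * x) + b * (α * y) := by ring
  nlinarith [hint, hsq]

/-- For a branching mechanism ψ of Lévy–Khintchine form satisfying the
extinction condition, with ψ⁻¹ the inverse of ψ and φ = ψ' ∘ ψ⁻¹, one has
λ/ψ⁻¹(λ) ≤ φ(λ) ≤ 4λ/ψ⁻¹(λ) for all λ > 0. -/
theorem phi_comparison (α β : ℝ) (hα : 0 ≤ α) (hβ : 0 ≤ β)
    (ν : Measure ℝ) (hν0 : ν (Set.Iic 0) = 0)
    (hνint : Integrable (fun r => min r (r ^ 2)) ν)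
    (ψ ψ' ψinv : ℝ → ℝ)
    (hψ : ∀ l : ℝ, 0 ≤ l →
      ψ l = α * l + β * l ^ 2 + ∫ r, (Real.exp (-(l * r)) - 1 + l * r) ∂ν)
    (hext : IntegrableOn (fun u => 1 / ψ u) (Set.Ioi 1))
    (hderiv : ∀ l : ℝ, 0 < l → HasDerivAt ψ (ψ' l) l)
    (hinvpos : ∀ l : ℝ, 0 < l → 0 < ψinv l)
    (hinv₁ : ∀ l : ℝ, 0 ≤ l → ψ (ψinv l) = l)
    (hinv₂ : ∀ l : ℝ, 0 ≤ l → ψinv (ψ l) = l) :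
    ∀ l : ℝ, 0 < l →
      l / ψinv l ≤ ψ' (ψinv l) ∧ ψ' (ψinv l) ≤ 4 * l / ψinv l := by
  intro l hl
  set μ := ψinv l with hμdef
  have hμ : 0 < μ := hinvpos l hl
  have hψμ : ψ μ = l := hinv₁ l hl.le
  have hψ0 : ψ 0 = 0 := by
    rw [hψ 0 le_rfl]; simp
  have hconv := psi_convex α β hα hβ ν hν0 hνint ψ hψ
  constructor
  · -- lower bound
    have h := hconv.slope_le_of_hasDerivAt (self_mem_Ici) (mem_Ici.mpr hμ.le) hμ (hderiv μ hμ)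
    rw [slope_def_field, hψμ, hψ0] at h
    simpa using h
  · -- upper bound
    have hμ2 : μ < 2 * μ := by linarith
    have h := hconv.le_slope_of_hasDerivAt (mem_Ici.mpr hμ.le)
      (mem_Ici.mpr (by linarith : (0:ℝ) ≤ 2 * μ)) hμ2 (hderiv μ hμ)
    rw [slope_def_field, hψμ] at h
    have hdbl : ψ (2 * μ) ≤ 4 * l := by
      rw [hψ (2 * μ) (by linarith), ← hψμ, hψ μ hμ.le]
      have hpos : ∀ᵐ r ∂ν, 0 < r := by
        rw [ae_iff]
        convert hν0 using 2
        ext r; simp [not_lt]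
      have hint : (∫ r, (Real.exp (-(2 * μ * r)) - 1 + 2 * μ * r) ∂ν)
          ≤ ∫ r, 4 * (Real.exp (-(μ * r)) - 1 + μ * r) ∂ν := by
        apply integral_mono_ae (integrable_F ν hν0 hνint (by linarith : (0:ℝ) ≤ 2 * μ))
          ((integrable_F ν hν0 hνint hμ.le).const_mul 4)
        filter_upwards [hpos] with r hr
        have := F_doubling (mul_nonneg hμ.le hr.le)
        have harg : 2 * (μ * r) = 2 * μ * r := by ring
        rw [harg] at this
        linarith
      rw [integral_const_mul] at hint
      nlinarith [hint, mul_nonneg hα hμ.le, mul_nonneg hβ (sq_nonneg μ),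
        integral_nonneg (μ := ν) (f := fun r => Real.exp (-(μ * r)) - 1 + μ * r) (fun r => F_nonneg (μ * r))]
    have heq : 2 * μ - μ = μ := by ring
    rw [heq] at h
    have h5 : (ψ (2 * μ) - l) / μ ≤ 4 * l / μ := by
      gcongr
      linarith [hdbl]
    exact h.trans h5
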